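/- For any even integer n, the element S_{12}S_{34}···S_{n-1,n} of the swap matrix algebra on n qubits cannot be written as a linear combination of products of fewer than n/2 swap matrices. -/

import Mathlib

/-- The qubit swap matrix `S_{ij}` on `(ℂ²)^{⊗ n}`, modeled as a matrix indexed by
functions `Fin n → Fin 2`: it permutes the tensor factors `i` and `j`. -/
def swapMatrix (n : ℕ) (i j : Fin n) :
    Matrix (Fin n → Fin 2) (Fin n → Fin 2) ℂ :=
  fun f g => if g = f ∘ (Equiv.swap i j) then 1 else 0

/-- The permutation matrix of `σ` acting on qubit labels by precomposition. -/
def permMatrix (n : ℕ) (σ : Equiv.Perm (Fin n)) :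
    Matrix (Fin n → Fin 2) (Fin n → Fin 2) ℂ :=
  fun f g => if g = f ∘ σ then 1 else 0

lemma permMatrix_one (n : ℕ) : permMatrix n 1 = 1 := by
  ext f g
  simp [permMatrix, Matrix.one_apply, eq_comm]

lemma permMatrix_mul (n : ℕ) (σ τ : Equiv.Perm (Fin n)) :
    permMatrix n σ * permMatrix n τ = permMatrix n (σ * τ) := by
  ext f h
  rw [Matrix.mul_apply]
  simp only [permMatrix]
  rw [Finset.sum_eq_single (f ∘ σ)]
  · simp [Function.comp_assoc]; exact if_congr Iff.rfl rfl rfl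
  · intro g _ hg
    simp [if_neg hg]
  · simp

lemma prod_map_permMatrix (n : ℕ) (L : List (Equiv.Perm (Fin n))) :
    (L.map (permMatrix n)).prod = permMatrix n L.prod := by
  induction L with
  | nil => simp [permMatrix_one]
  | cons a L ih => simp [ih, permMatrix_mul]

lemma fixed_of_not_mem (n : ℕ) (L : List (Fin n × Fin n)) (x : Fin n)
    (h : ∀ p ∈ L, x ≠ p.1 ∧ x ≠ p.2) :
    ((L.map (fun p => Equiv.swap p.1 p.2)).prod) x = x := by
  induction L with
  | nil => simp
  | cons a L ih =>
    have ha := h a List.mem_cons_self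
    have := ih (fun p hp => h p (List.mem_cons_of_mem a hp))
    simp only [List.map_cons, List.prod_cons, Equiv.Perm.mul_apply, this]
    exact Equiv.swap_apply_of_ne_of_ne ha.1 ha.2

lemma exists_fixed (n : ℕ) (L : List (Fin n × Fin n)) (h : 2 * L.length < n) :
    ∃ x : Fin n, ((L.map (fun p => Equiv.swap p.1 p.2)).prod) x = x := by
  set S : Finset (Fin n) := (L.map Prod.fst ++ L.map Prod.snd).toFinset with hS
  have hcard : S.card < n := by
    calc S.card ≤ (L.map Prod.fst ++ L.map Prod.snd).length := List.toFinset_card_le _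
    _ = 2 * L.length := by simp; omega
    _ < n := h
  have : ∃ x : Fin n, x ∉ S := by
    by_contra hc
    push_neg at hc
    have : (Finset.univ : Finset (Fin n)).card ≤ S.card :=
      Finset.card_le_card (fun x _ => hc x)
    simp at this
    omega
  obtain ⟨x, hx⟩ := this
  refine ⟨x, fixed_of_not_mem n L x ?_⟩
  intro p hp
  constructor
  · rintro rfl
    exact hx (by simp only [hS, List.mem_toFinset, List.mem_append, List.mem_map]; exact Or.inl ⟨p, hp, rfl⟩)
  · rintro rfl
    exact hx (by simp only [hS, List.mem_toFinset, List.mem_append, List.mem_map]; exact Or.inr ⟨p, hp, rfl⟩)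

/-- The swap of qubits `2k` and `2k+1`. -/
def pairSwap (m : ℕ) (k : Fin m) : Equiv.Perm (Fin (2 * m)) :=
  Equiv.swap ⟨2 * k.val, by have := k.isLt; omega⟩ ⟨2 * k.val + 1, by have := k.isLt; omega⟩

lemma pairSwap_prod_apply (m : ℕ) (L : List (Fin m)) (hL : L.Nodup)
    (j : Fin m) (b : Fin 2) :
    ((L.map (pairSwap m)).prod) ⟨2 * j.val + b.val, by have := j.isLt; have := b.isLt; omega⟩ =
      if j ∈ L then (⟨2 * j.val + (1 - b.val), by have := j.isLt; omega⟩ : Fin (2 * m))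
      else ⟨2 * j.val + b.val, by have := j.isLt; have := b.isLt; omega⟩ := by
  induction L with
  | nil => simp
  | cons a L ih =>
    have hL' := hL.of_cons
    have haL : a ∉ L := (List.nodup_cons.mp hL).1
    simp only [List.map_cons, List.prod_cons, Equiv.Perm.mul_apply, ih hL']
    by_cases hja : j = a
    · subst hja
      simp only [haL, if_false, ite_false, List.mem_cons, true_or, if_true, ite_true]
      have hb := b.isLt
      unfold pairSwap
      have hb2 : b.val = 0 ∨ b.val = 1 := by omega
      rcases hb2 with h0 | h1
      · have : (⟨2 * j.val + b.val, by have := j.isLt; have := b.isLt; omega⟩ : Fin (2 * m)) = ⟨2 * j.val, by have := j.isLt; omega⟩ := by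
          exact Fin.ext (by simp [h0])
        rw [this, Equiv.swap_apply_left]
        exact Fin.ext (by simp [h0])
      · have : (⟨2 * j.val + b.val, by have := j.isLt; have := b.isLt; omega⟩ : Fin (2 * m)) = ⟨2 * j.val + 1, by have := j.isLt; omega⟩ := by
          exact Fin.ext (by simp [h1])
        rw [this, Equiv.swap_apply_right]
        exact Fin.ext (by simp [h1])
    · have hmem : (j ∈ a :: L) = (j ∈ L) := by simp [hja]
      simp only [hmem]
      have hval : j.val ≠ a.val := fun h => hja (Fin.ext h)
      by_cases hjL : j ∈ L <;> simp only [hjL, if_pos, if_neg, ite_true, ite_false] <;>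
        exact Equiv.swap_apply_of_ne_of_ne
          (by rw [Fin.ne_iff_vne]; simp; omega) (by rw [Fin.ne_iff_vne]; simp; omega)

set_option maxHeartbeats 1000000 in
/-- For any even integer `n = 2m`, the product `S_{12} S_{34} ⋯ S_{n-1,n}` of the
`m` disjoint swap matrices cannot be written as a linear combination of products
of fewer than `n/2` swap matrices. -/
theorem disjoint_swap_product_not_in_span_of_shorter_products
    (n m : ℕ) (hn : n = 2 * m) :
    ((List.finRange m).map (fun i =>
        swapMatrix n ⟨2 * i.val, by have := i.isLt; omega⟩
          ⟨2 * i.val + 1, by have := i.isLt; omega⟩)).prod ∉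
      Submodule.span ℂ
        { M : Matrix (Fin n → Fin 2) (Fin n → Fin 2) ℂ |
          ∃ L : List (Fin n × Fin n), L.length < m ∧ (∀ p ∈ L, p.1 ≠ p.2) ∧
            M = (L.map (fun p => swapMatrix n p.1 p.2)).prod } := by
  subst hn
  intro hmem
  -- the linear functional Φ M = ∑_f M f (f + 1)
  set Φ : Matrix (Fin (2 * m) → Fin 2) (Fin (2 * m) → Fin 2) ℂ → ℂ :=
    fun M => ∑ f : Fin (2 * m) → Fin 2, M f (fun i => f i + 1) with hΦ
  -- Φ vanishes on the span
  have hzero : ∀ M ∈ Submodule.span ℂ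
      { M : Matrix (Fin (2 * m) → Fin 2) (Fin (2 * m) → Fin 2) ℂ |
        ∃ L : List (Fin (2 * m) × Fin (2 * m)), L.length < m ∧ (∀ p ∈ L, p.1 ≠ p.2) ∧
          M = (L.map (fun p => swapMatrix (2 * m) p.1 p.2)).prod }, Φ M = 0 := by
    intro M hM
    induction hM using Submodule.span_induction with
    | mem x hx =>
      obtain ⟨L, hlen, -, rfl⟩ := hx
      have hrw : (L.map (fun p => swapMatrix (2 * m) p.1 p.2))
          = (L.map (fun p => Equiv.swap p.1 p.2)).map (permMatrix (2 * m)) := by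
        rw [List.map_map]
        rfl
      rw [hrw, prod_map_permMatrix]
      obtain ⟨x, hx⟩ := exists_fixed (2 * m) L (by omega)
      simp only [hΦ, permMatrix]
      refine Finset.sum_eq_zero (fun f _ => ?_)
      rw [if_neg]
      intro heq
      have h := congrFun heq x
      simp only [Function.comp_apply, hx] at h
      have hne : ∀ c : Fin 2, c + 1 ≠ c := by decide
      exact hne (f x) h
    | zero => simp [hΦ]
    | add x y _ _ hx hy =>
      have hxy : Φ (x + y) = Φ x + Φ y := by
        simp only [hΦ, Matrix.add_apply, Finset.sum_add_distrib]
      rw [hxy, hx, hy, add_zero]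
    | smul a x _ hx =>
      have hax : Φ (a • x) = a * Φ x := by
        simp only [hΦ, Matrix.smul_apply, smul_eq_mul, Finset.mul_sum]
      rw [hax, hx, mul_zero]
  have h0 := hzero _ hmem
  -- but Φ of the target product is a positive integer
  have hrw : ((List.finRange m).map (fun i =>
        swapMatrix (2 * m) ⟨2 * i.val, by have := i.isLt; omega⟩
          ⟨2 * i.val + 1, by have := i.isLt; omega⟩))
      = ((List.finRange m).map (pairSwap m)).map (permMatrix (2 * m)) := by
    rw [List.map_map]
    rfl
  rw [hrw, prod_map_permMatrix] at h0
  set σ₀ := ((List.finRange m).map (pairSwap m)).prod with hσ₀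
  have hcount : Φ (permMatrix (2 * m) σ₀)
      = ((Finset.univ.filter (fun f : Fin (2 * m) → Fin 2 =>
          (fun i => f i + 1) = f ∘ σ₀)).card : ℂ) := by
    simp only [hΦ, permMatrix]
    rw [Finset.sum_boole]
  -- the candidate f₀
  set f₀ : Fin (2 * m) → Fin 2 := fun i => ⟨i.val % 2, Nat.mod_lt _ (by norm_num)⟩ with hf₀
  have hf₀mem : (fun i => f₀ i + 1) = f₀ ∘ σ₀ := by
    funext x
    have hxlt := x.isLt
    set j : Fin m := ⟨x.val / 2, by omega⟩ with hj
    set b : Fin 2 := ⟨x.val % 2, by omega⟩ with hb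
    have hx : x = ⟨2 * j.val + b.val, by have := j.isLt; have := b.isLt; omega⟩ := by
      apply Fin.ext
      simp [hj, hb]
      omega
    have happ := pairSwap_prod_apply m (List.finRange m) (List.nodup_finRange m) j b
    rw [if_pos (List.mem_finRange j)] at happ
    simp only [Function.comp_apply, ← hσ₀] at happ ⊢
    rw [hx, happ]
    apply Fin.ext
    have hb2 : x.val % 2 = 0 ∨ x.val % 2 = 1 := by omega
    rcases hb2 with h | h <;>
      simp [hf₀, hj, hb, h, Fin.add_def] <;> omega
  have hpos : (Finset.univ.filter (fun f : Fin (2 * m) → Fin 2 =>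
      (fun i => f i + 1) = f ∘ σ₀)).card ≠ 0 :=
    Finset.card_ne_zero_of_mem (Finset.mem_filter.mpr ⟨Finset.mem_univ f₀, hf₀mem⟩)
  rw [hcount] at h0
  exact hpos (by exact_mod_cast h0)
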